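/- Let $n \geq 1$ and let $1 = t_0 < t_1 < \cdots < t_n$ be integers. Set $\Delta = \max_{1 \leq s \leq n} (t_s - t_0)/s$. Then for all real numbers $a_0 \geq a_1 \geq \cdots \geq a_{n-1} \geq 1$, one has $a_0^{t_1 - t_0} a_1^{t_2 - t_1} \cdots a_{n-1}^{t_n - t_{n-1}} \leq (a_0 a_1 \cdots a_{n-1})^{\Delta}$. -/

import Mathlib

open Finset

theorem gap_lemma_multiplicative (n : ℕ) (hn : 1 ≤ n) (t : ℕ → ℤ)
    (ht0 : t 0 = 1) (htmono : StrictMonoOn t (Set.Icc 0 n))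
    (Δ : ℝ)
    (hΔ : Δ = (Finset.Icc 1 n).sup' (Finset.nonempty_Icc.2 hn)
      (fun s => ((t s - t 0 : ℤ) : ℝ) / (s : ℝ)))
    (a : ℕ → ℝ) (hamono : ∀ i j, i ≤ j → j < n → a j ≤ a i)
    (ha1 : ∀ i, i < n → 1 ≤ a i) :
    ∏ s ∈ Finset.range n, a s ^ (((t (s + 1) - t s : ℤ) : ℝ)) ≤
      (∏ s ∈ Finset.range n, a s) ^ Δ := by
  have hapos : ∀ i, i < n → 0 < a i := fun i hi => lt_of_lt_of_le one_pos (ha1 i hi)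
  set x : ℕ → ℝ := fun s => if s < n then Real.log (a s) else 0 with hxdef
  set T : ℕ → ℝ := fun k => ((t k - t 0 : ℤ) : ℝ) with hTdef
  have hT0 : T 0 = 0 := by simp [hTdef]
  have hxn : x n = 0 := by simp [hxdef]
  have hx0 : ∀ s, 0 ≤ x s := by
    intro s
    simp only [hxdef]
    split
    · exact Real.log_nonneg (ha1 s (by assumption))
    · exact le_refl 0
  have hxmono : ∀ s, x (s + 1) ≤ x s := by
    intro s
    simp only [hxdef]
    by_cases h : s + 1 < n
    · rw [if_pos h, if_pos (Nat.lt_of_succ_lt h)]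
      exact Real.log_le_log (hapos _ h) (hamono s (s+1) (Nat.le_succ s) h)
    · rw [if_neg h]
      split
      · exact Real.log_nonneg (ha1 s (by assumption))
      · exact le_refl 0
  have hΔs : ∀ s, 1 ≤ s → s ≤ n → T s ≤ Δ * s := by
    intro s h1 h2
    have hle : ((t s - t 0 : ℤ) : ℝ) / (s : ℝ) ≤ Δ := by
      rw [hΔ]
      exact Finset.le_sup' (f := fun s : ℕ => ((t s - t 0 : ℤ) : ℝ) / (s : ℝ))
        (Finset.mem_Icc.2 ⟨h1, h2⟩)
    have hs : (0 : ℝ) < s := by exact_mod_cast Nat.lt_of_lt_of_le Nat.zero_lt_one h1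
    rw [div_le_iff₀ hs] at hle
    calc T s = ((t s - t 0 : ℤ) : ℝ) := rfl
    _ ≤ Δ * s := hle
  -- key identity: ∑ T s * x s = ∑ T (s+1) * x (s+1) over range n
  have key1 : ∑ s ∈ Finset.range n, T s * x s
      = ∑ s ∈ Finset.range n, T (s + 1) * x (s + 1) := by
    have h1 : ∑ s ∈ Finset.range (n + 1), T s * x s
        = ∑ s ∈ Finset.range n, T s * x s + T n * x n := Finset.sum_range_succ _ n
    have h2 : ∑ s ∈ Finset.range (n + 1), T s * x s
        = (∑ s ∈ Finset.range n, T (s + 1) * x (s + 1)) + T 0 * x 0 :=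
      Finset.sum_range_succ' _ n
    rw [hxn, hT0] at *
    simp only [mul_zero, zero_mul, add_zero] at h1 h2
    rw [← h1, h2]
  have key2 : ∑ s ∈ Finset.range n, (s : ℝ) * x s
      = ∑ s ∈ Finset.range n, ((s : ℝ) + 1) * x (s + 1) := by
    have h1 : ∑ s ∈ Finset.range (n + 1), (s : ℝ) * x s
        = ∑ s ∈ Finset.range n, (s : ℝ) * x s + (n : ℝ) * x n := Finset.sum_range_succ _ n
    have h2 := Finset.sum_range_succ' (fun k => (k : ℝ) * x k) n
    rw [hxn] at h1
    simp only [Nat.cast_add, Nat.cast_one, Nat.cast_zero, mul_zero, zero_mul, add_zero] at h1 h2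
    rw [← h1, h2]
  -- the main sum inequality
  have main : ∑ s ∈ Finset.range n, (T (s + 1) - T s) * x s
      ≤ Δ * ∑ s ∈ Finset.range n, x s := by
    have e1 : ∑ s ∈ Finset.range n, (T (s + 1) - T s) * x s
        = ∑ s ∈ Finset.range n, T (s + 1) * (x s - x (s + 1)) := by
      simp only [sub_mul, mul_sub, Finset.sum_sub_distrib]
      rw [key1]
    have e2 : ∑ s ∈ Finset.range n, ((s : ℝ) + 1) * (x s - x (s + 1))
        = ∑ s ∈ Finset.range n, x s := by
      simp only [mul_sub, Finset.sum_sub_distrib]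
      rw [← key2]
      simp only [add_mul, one_mul, Finset.sum_add_distrib]
      ring
    rw [e1, ← e2, Finset.mul_sum]
    apply Finset.sum_le_sum
    intro s hs
    have hsn : s < n := Finset.mem_range.mp hs
    have hd : 0 ≤ x s - x (s + 1) := sub_nonneg.2 (hxmono s)
    have hT : T (s + 1) ≤ Δ * ((s : ℝ) + 1) := by
      have := hΔs (s + 1) (Nat.le_add_left 1 s) hsn
      push_cast at this
      linarith
    calc T (s + 1) * (x s - x (s + 1)) ≤ (Δ * ((s : ℝ) + 1)) * (x s - x (s + 1)) :=
          mul_le_mul_of_nonneg_right hT hd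
      _ = Δ * (((s : ℝ) + 1) * (x s - x (s + 1))) := by ring
  -- convert to the multiplicative statement
  have hprodpos : 0 < ∏ s ∈ Finset.range n, a s :=
    Finset.prod_pos (fun i hi => hapos i (Finset.mem_range.mp hi))
  have lhs_eq : ∏ s ∈ Finset.range n, a s ^ (((t (s + 1) - t s : ℤ) : ℝ))
      = Real.exp (∑ s ∈ Finset.range n, (T (s + 1) - T s) * x s) := by
    rw [Real.exp_sum]
    apply Finset.prod_congr rfl
    intro s hs
    have hsn : s < n := Finset.mem_range.mp hs
    rw [Real.rpow_def_of_pos (hapos s hsn)]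
    congr 1
    simp only [hxdef, hTdef, if_pos hsn]
    push_cast
    ring
  have rhs_eq : (∏ s ∈ Finset.range n, a s) ^ Δ
      = Real.exp (Δ * ∑ s ∈ Finset.range n, x s) := by
    rw [Real.rpow_def_of_pos hprodpos]
    congr 1
    rw [Real.log_prod (fun i hi => (hapos i (Finset.mem_range.mp hi)).ne')]
    rw [Finset.mul_sum, Finset.sum_mul]
    apply Finset.sum_congr rfl
    intro s hs
    simp only [hxdef, if_pos (Finset.mem_range.mp hs)]
    ring
  rw [lhs_eq, rhs_eq]
  exact Real.exp_le_exp.2 main
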